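/- Under the assumption ε₀² − ε₃² = (m')² − κ₀² together with (ε₀, ε₃, κ₀, m') ≠ (0,0,0,0) viewed over ℝ with ε₀ + m' ≠ 0 or ε₃ − κ₀ ≠ 0, the 4×4 matrix M = !![ε₀−m', 0, −ε₃−κ₀, 0; 0, ε₀−m', 0, ε₃+κ₀; ε₃−κ₀, 0, −ε₀−m', 0; 0, −ε₃+κ₀, 0, −ε₀−m'] has rank exactly 2. -/
import Mathlib

open Matrix

theorem dirac_matrix_rank_two (ε₀ ε₃ κ₀ m' : ℝ)
    (hshell : ε₀ ^ 2 - ε₃ ^ 2 = m' ^ 2 - κ₀ ^ 2)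
    (hne : ε₀ + m' ≠ 0 ∨ ε₃ - κ₀ ≠ 0) :
    (!![ε₀ - m', 0, -ε₃ - κ₀, 0;
        0, ε₀ - m', 0, ε₃ + κ₀;
        ε₃ - κ₀, 0, -ε₀ - m', 0;
        0, -ε₃ + κ₀, 0, -ε₀ - m'] : Matrix (Fin 4) (Fin 4) ℝ).rank = 2 := by
  set M : Matrix (Fin 4) (Fin 4) ℝ :=
    !![ε₀ - m', 0, -ε₃ - κ₀, 0;
        0, ε₀ - m', 0, ε₃ + κ₀;
        ε₃ - κ₀, 0, -ε₀ - m', 0;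
        0, -ε₃ + κ₀, 0, -ε₀ - m'] with hMdef
  have rel : (ε₀ - m') * (ε₀ + m') = (ε₃ + κ₀) * (ε₃ - κ₀) := by nlinarith [hshell]
  set C : Matrix (Fin 2) (Fin 4) ℝ :=
    !![ε₃ - κ₀, 0, -(ε₀ + m'), 0; 0, -(ε₃ - κ₀), 0, -(ε₀ + m')] with hCdef
  have hPM : (!![0,0,1,0;0,0,0,1] : Matrix (Fin 2) (Fin 4) ℝ) * M = C := by
    ext i j
    fin_cases i <;> fin_cases j <;>
      simp [hMdef, hCdef, Matrix.mul_apply, Fin.sum_univ_four] <;> ring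
  apply le_antisymm
  · -- rank ≤ 2
    rcases hne with hs | hc
    · have hfac : M = (!![(ε₃+κ₀)/(ε₀+m'), 0; 0, -((ε₃+κ₀)/(ε₀+m')); 1, 0; 0, 1] :
          Matrix (Fin 4) (Fin 2) ℝ) * C := by
        ext i j
        fin_cases i <;> fin_cases j <;>
          simp [hMdef, hCdef, Matrix.mul_apply, Fin.sum_univ_two]
        all_goals try field_simp
        all_goals try linear_combination rel
        all_goals try linear_combination -rel
        all_goals try ring
      calc M.rank ≤ C.rank := by rw [hfac]; exact Matrix.rank_mul_le_right _ _
        _ ≤ Fintype.card (Fin 2) := Matrix.rank_le_card_height C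
        _ = 2 := by simp
    · have hfac : M = (!![(ε₀-m')/(ε₃-κ₀), 0; 0, -((ε₀-m')/(ε₃-κ₀)); 1, 0; 0, 1] :
          Matrix (Fin 4) (Fin 2) ℝ) * C := by
        ext i j
        fin_cases i <;> fin_cases j <;>
          simp [hMdef, hCdef, Matrix.mul_apply, Fin.sum_univ_two]
        all_goals try field_simp
        all_goals try linear_combination rel
        all_goals try linear_combination -rel
        all_goals try ring
      calc M.rank ≤ C.rank := by rw [hfac]; exact Matrix.rank_mul_le_right _ _
        _ ≤ Fintype.card (Fin 2) := Matrix.rank_le_card_height C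
        _ = 2 := by simp
  · -- 2 ≤ rank
    rcases hne with hs | hc
    · have hE : C * (!![0,0;0,0;1,0;0,1] : Matrix (Fin 4) (Fin 2) ℝ)
          = !![-(ε₀+m'), 0; 0, -(ε₀+m')] := by
        ext i j
        fin_cases i <;> fin_cases j <;>
          simp [hCdef, Matrix.mul_apply, Fin.sum_univ_four, Matrix.vecHead, Matrix.vecTail]
      have hunit : IsUnit (!![-(ε₀+m'), 0; 0, -(ε₀+m')] : Matrix (Fin 2) (Fin 2) ℝ) := by
        rw [Matrix.isUnit_iff_isUnit_det, Matrix.det_fin_two_of]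
        have h1 : -(ε₀+m') * -(ε₀+m') - 0*0 = (ε₀+m')^2 := by ring
        rw [h1]
        exact isUnit_iff_ne_zero.mpr (pow_ne_zero 2 hs)
      have h2 : (!![-(ε₀+m'), 0; 0, -(ε₀+m')] : Matrix (Fin 2) (Fin 2) ℝ).rank = 2 := by
        rw [Matrix.rank_of_isUnit _ hunit]; simp
      calc (2:ℕ)
          = ((C * (!![0,0;0,0;1,0;0,1] : Matrix (Fin 4) (Fin 2) ℝ))).rank := by rw [hE, h2]
        _ ≤ C.rank := Matrix.rank_mul_le_left _ _
        _ = ((!![0,0,1,0;0,0,0,1] : Matrix (Fin 2) (Fin 4) ℝ) * M).rank := by rw [hPM]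
        _ ≤ M.rank := Matrix.rank_mul_le_right _ _
    · have hE : C * (!![1,0;0,1;0,0;0,0] : Matrix (Fin 4) (Fin 2) ℝ)
          = !![ε₃-κ₀, 0; 0, -(ε₃-κ₀)] := by
        ext i j
        fin_cases i <;> fin_cases j <;>
          simp [hCdef, Matrix.mul_apply, Fin.sum_univ_four, Matrix.vecHead, Matrix.vecTail]
      have hunit : IsUnit (!![ε₃-κ₀, 0; 0, -(ε₃-κ₀)] : Matrix (Fin 2) (Fin 2) ℝ) := by
        rw [Matrix.isUnit_iff_isUnit_det, Matrix.det_fin_two_of]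
        have h1 : (ε₃-κ₀) * -(ε₃-κ₀) - 0*0 = -((ε₃-κ₀)^2) := by ring
        rw [h1]
        exact isUnit_iff_ne_zero.mpr (neg_ne_zero.mpr (pow_ne_zero 2 hc))
      have h2 : (!![ε₃-κ₀, 0; 0, -(ε₃-κ₀)] : Matrix (Fin 2) (Fin 2) ℝ).rank = 2 := by
        rw [Matrix.rank_of_isUnit _ hunit]; simp
      calc (2:ℕ)
          = ((C * (!![1,0;0,1;0,0;0,0] : Matrix (Fin 4) (Fin 2) ℝ))).rank := by rw [hE, h2]
        _ ≤ C.rank := Matrix.rank_mul_le_left _ _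
        _ = ((!![0,0,1,0;0,0,0,1] : Matrix (Fin 2) (Fin 4) ℝ) * M).rank := by rw [hPM]
        _ ≤ M.rank := Matrix.rank_mul_le_right _ _
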